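/- Let q be an element of a commutative ℚ-algebra and let S be a formal power series with constant term 1 satisfying S = 1 - q·x·S + (1+q)·x·S². Then 1 - x - (q+1)x(S - 1) is a unit and (1 - x)/(1 - x - (q+1)x(S-1)) = (1 - x)·S. -/

import Mathlib

open PowerSeries

theorem stmt7 (A : Type*) [CommRing A] [Algebra ℚ A] (q : A)
    (S : PowerSeries A) (hS0 : constantCoeff S = 1)
    (hS : S = 1 - C q * X * S + (1 + C q) * X * S ^ 2) :
    IsUnit (1 - X - (C q + 1) * X * (S - 1)) ∧
      (1 - X - (C q + 1) * X * (S - 1)) * ((1 - X) * S) = 1 - X := by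
  have key : (1 - X - (C q + 1) * X * (S - 1)) * S = 1 := by
    linear_combination hS
  exact ⟨IsUnit.of_mul_eq_one _ key, by linear_combination (1 - X) * hS⟩
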